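/- Let k ≥ 2 and n be natural numbers, let c ≥ 0 be a real number, and let g : ℕ × ℕ → ℝ satisfy: g(n+1, r) = 0 for all r; g(ℓ, 0) ≥ 0 for all ℓ; and for all ℓ with k² + k ≤ ℓ ≤ n and all r with 1 ≤ r ≤ k, g(ℓ, r) ≥ ∑_{j=ℓ}^{n} ((ℓ−k)/(j−k))^k · ((k−1)/(j+1) · g(j+1, r−1) + c/n). Then for all ℓ with k² + k ≤ ℓ ≤ n and all r with 0 ≤ r ≤ k, g(ℓ, r) ≥ ( rℓ/((k−1)n) − (1/(k−1))·(ℓ/n)^k · ∑_{r'=0}^{r−1} ∑_{i=0}^{r'} ((k−1)^i / i!)·(ln(n/ℓ))^i − 3k²r/((k−1)n) ) · c. -/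

import Mathlib

open Finset


lemma pow_sub_pow_le_upper {a b : ℝ} (hb : 0 ≤ b) (hba : b ≤ a) :
    ∀ m : ℕ, a ^ (m+1) - b ^ (m+1) ≤ (m+1) * a ^ m * (a - b) := by
  intro m
  induction m with
  | zero => norm_num
  | succ m ih =>
      have ha : 0 ≤ a := hb.trans hba
      have h1 : b ^ (m+1) ≤ a ^ (m+1) := pow_le_pow_left₀ hb hba _
      have h2 : a * (a ^ (m+1) - b ^ (m+1)) ≤ a * ((m+1) * a ^ m * (a - b)) :=
        mul_le_mul_of_nonneg_left ih ha
      have h3 : a ^ (m+2) - b ^ (m+2) =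
          a * (a ^ (m+1) - b ^ (m+1)) + b ^ (m+1) * (a - b) := by ring
      have h4 : b ^ (m+1) * (a-b) ≤ a ^ (m+1) * (a-b) :=
        mul_le_mul_of_nonneg_right h1 (sub_nonneg.2 hba)
      have h5 : a ^ (m+2) - b ^ (m+2) ≤ ((m:ℝ)+1+1) * a ^ (m+1) * (a-b) := by
        calc a ^ (m+2) - b ^ (m+2) = a * (a ^ (m+1) - b ^ (m+1)) + b ^ (m+1) * (a - b) := h3
        _ ≤ a * ((m+1) * a ^ m * (a - b)) + a ^ (m+1) * (a-b) := by linarith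
        _ = ((m:ℝ)+1+1) * a ^ (m+1) * (a-b) := by ring
      push_cast
      ring_nf
      ring_nf at h5
      linarith

lemma pow_sub_pow_ge_lower {a b : ℝ} (hb : 0 ≤ b) (hba : b ≤ a) :
    ∀ m : ℕ, (m+1) * b ^ m * (a - b) ≤ a ^ (m+1) - b ^ (m+1) := by
  intro m
  induction m with
  | zero => norm_num
  | succ m ih =>
      have ha : 0 ≤ a := hb.trans hba
      have hbm : 0 ≤ b ^ (m+1) := pow_nonneg hb _
      have hbm' : b ^ (m+1) ≤ a * b ^ m := by
        calc b ^ (m+1) = b * b ^ m := by ring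
        _ ≤ a * b ^ m := mul_le_mul_of_nonneg_right hba (pow_nonneg hb _)
      have h2 : a * ((m+1) * b ^ m * (a - b)) ≤ a * (a ^ (m+1) - b ^ (m+1)) :=
        mul_le_mul_of_nonneg_left ih ha
      have h3 : a ^ (m+2) - b ^ (m+2) =
          a * (a ^ (m+1) - b ^ (m+1)) + b ^ (m+1) * (a - b) := by ring
      push_cast
      nlinarith [h2, h3, hbm, hbm', mul_le_mul_of_nonneg_right hbm' (sub_nonneg.2 hba)]

lemma tele_upper (m : ℕ) {x : ℝ} (hx : 0 < x) :
    1 / x ^ (m+1) - 1 / (x+1) ^ (m+1) ≤ (m+1) / x ^ (m+2) := by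
  have hx1 : (0:ℝ) < x + 1 := by linarith
  have hp : (0:ℝ) < x ^ (m+1) := pow_pos hx _
  have hp1 : (0:ℝ) < (x+1) ^ (m+1) := pow_pos hx1 _
  have hp2 : (0:ℝ) < x ^ (m+2) := pow_pos hx _
  have key : (x+1) ^ (m+1) - x ^ (m+1) ≤ (m+1) * (x+1) ^ m := by
    have := pow_sub_pow_le_upper hx.le (by linarith : x ≤ x + 1) m
    simpa using this
  rw [div_sub_div _ _ (ne_of_gt hp) (ne_of_gt hp1), div_le_div_iff₀ (by positivity) hp2, one_mul, mul_one]
  calc ((x+1)^(m+1) - x^(m+1)) * x ^ (m+2)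
      ≤ ((m+1) * (x+1)^m) * x ^ (m+2) := by
        apply mul_le_mul_of_nonneg_right key (le_of_lt hp2)
    _ ≤ (m+1) * (x ^ (m+1) * (x+1) ^ (m+1)) := by
        have : (x+1)^m * x ^ (m+2) ≤ x ^ (m+1) * (x+1)^(m+1) := by
          have : x * (x+1) ^ m ≤ (x + 1) * (x+1) ^ m :=
            mul_le_mul_of_nonneg_right (by linarith) (pow_nonneg hx1.le _)
          calc (x+1)^m * x ^ (m+2) = (x * (x+1)^m) * x ^ (m+1) := by ring
          _ ≤ ((x+1) * (x+1)^m) * x ^ (m+1) :=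
              mul_le_mul_of_nonneg_right this (le_of_lt hp)
          _ = x ^ (m+1) * (x+1)^(m+1) := by ring
        calc (m+1 : ℝ) * (x+1)^m * x ^ (m+2) = (m+1) * ((x+1)^m * x ^ (m+2)) := by ring
        _ ≤ (m+1) * (x ^ (m+1) * (x+1)^(m+1)) := by
            apply mul_le_mul_of_nonneg_left this (by positivity)

lemma tele_lower (m : ℕ) {x : ℝ} (hx : 0 < x) :
    (m+1) / (x+1) ^ (m+2) ≤ 1 / x ^ (m+1) - 1 / (x+1) ^ (m+1) := by
  have hx1 : (0:ℝ) < x + 1 := by linarith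
  have hp : (0:ℝ) < x ^ (m+1) := pow_pos hx _
  have hp1 : (0:ℝ) < (x+1) ^ (m+1) := pow_pos hx1 _
  have hp2 : (0:ℝ) < (x+1) ^ (m+2) := pow_pos hx1 _
  have key : (m+1) * x ^ m ≤ (x+1) ^ (m+1) - x ^ (m+1) := by
    have := pow_sub_pow_ge_lower hx.le (by linarith : x ≤ x + 1) m
    simpa using this
  rw [div_sub_div _ _ (ne_of_gt hp) (ne_of_gt hp1), div_le_div_iff₀ hp2 (by positivity), one_mul, mul_one]
  calc (m+1:ℝ) * (x ^ (m+1) * (x+1)^(m+1))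
      = ((m+1) * x ^ m) * (x * (x+1)^(m+1)) := by ring
    _ ≤ ((x+1)^(m+1) - x^(m+1)) * (x * (x+1)^(m+1)) := by
        apply mul_le_mul_of_nonneg_right key (by positivity)
    _ ≤ ((x+1)^(m+1) - x^(m+1)) * (x+1)^(m+2) := by
        apply mul_le_mul_of_nonneg_left _ (by nlinarith [pow_le_pow_left₀ hx.le (by linarith : x ≤ x+1) (m+1)])
        calc x * (x+1)^(m+1) ≤ (x+1) * (x+1)^(m+1) :=
              mul_le_mul_of_nonneg_right (by linarith) hp1.le
        _ = (x+1)^(m+2) := by ring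
noncomputable def secS (k n r ℓ : ℕ) : ℝ :=
  ∑ r' ∈ Finset.range r, ∑ i ∈ Finset.range (r' + 1),
    ((k : ℝ) - 1) ^ i / (Nat.factorial i) * (Real.log ((n : ℝ) / ℓ)) ^ i
noncomputable def secW (k n r ℓ : ℕ) : ℝ :=
  ∑ r' ∈ Finset.range r, ∑ i ∈ Finset.range (r' + 1),
    ((k : ℝ) - 1) ^ i / (Nat.factorial i) * (Real.log ((n : ℝ) / ℓ)) ^ (i+1) / (i+1)

section
variable (k n r ℓ : ℕ)

lemma log_nonneg_of_le (hℓ : 0 < ℓ) (hln : ℓ ≤ n) : 0 ≤ Real.log ((n : ℝ) / ℓ) := by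
  apply Real.log_nonneg
  rw [le_div_iff₀ (by exact_mod_cast hℓ)]
  simpa using (by exact_mod_cast hln : (ℓ:ℝ) ≤ n)

lemma secS_nonneg (hk : 2 ≤ k) (hℓ : 0 < ℓ) (hln : ℓ ≤ n) : 0 ≤ secS k n r ℓ := by
  have hL := log_nonneg_of_le n ℓ hℓ hln
  have hM : (0:ℝ) ≤ (k:ℝ) - 1 := by
    have : (2:ℝ) ≤ k := by exact_mod_cast hk
    linarith
  unfold secS
  positivity

lemma secS_ge (hk : 2 ≤ k) (hℓ : 0 < ℓ) (hln : ℓ ≤ n) : (r:ℝ) ≤ secS k n r ℓ := by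
  have hL := log_nonneg_of_le n ℓ hℓ hln
  have hM : (0:ℝ) ≤ (k:ℝ) - 1 := by
    have : (2:ℝ) ≤ k := by exact_mod_cast hk
    linarith
  unfold secS
  calc (r:ℝ) = ∑ r' ∈ Finset.range r, (1:ℝ) := by simp
  _ ≤ _ := by
      apply Finset.sum_le_sum
      intro r' _
      have h0 : ((k : ℝ) - 1) ^ 0 / (Nat.factorial 0) * (Real.log ((n : ℝ) / ℓ)) ^ 0 = 1 := by
        simp
      calc (1:ℝ) = ((k : ℝ) - 1) ^ 0 / (Nat.factorial 0) * (Real.log ((n : ℝ) / ℓ)) ^ 0 := h0.symm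
      _ ≤ _ := by
          apply Finset.single_le_sum (f := fun i => ((k : ℝ) - 1) ^ i / (Nat.factorial i) *
            (Real.log ((n : ℝ) / ℓ)) ^ i)
          · intro i _
            positivity
          · simp

lemma secS_le (hk : 2 ≤ k) (hℓ : 0 < ℓ) (hln : ℓ ≤ n) :
    secS k n r ℓ ≤ (r:ℝ) * ((n:ℝ)/ℓ) ^ (k-1) := by
  have hL := log_nonneg_of_le n ℓ hℓ hln
  have hM : (0:ℝ) ≤ (k:ℝ) - 1 := by
    have : (2:ℝ) ≤ k := by exact_mod_cast hk
    linarith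
  have hnl : (0:ℝ) < (n:ℝ)/ℓ := by
    have h1 : (0:ℝ) < ℓ := by exact_mod_cast hℓ
    have h2 : (0:ℝ) < n := by
      have := hℓ.trans_le hln; exact_mod_cast this
    positivity
  unfold secS
  have key : ∀ r' ∈ Finset.range r, ∑ i ∈ Finset.range (r' + 1),
      ((k : ℝ) - 1) ^ i / (Nat.factorial i) * (Real.log ((n : ℝ) / ℓ)) ^ i
      ≤ ((n:ℝ)/ℓ) ^ (k-1) := by
    intro r' _
    have h1 : ∀ i : ℕ, ((k : ℝ) - 1) ^ i / (Nat.factorial i) * (Real.log ((n : ℝ) / ℓ)) ^ i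
        = (((k:ℝ)-1) * Real.log ((n : ℝ) / ℓ)) ^ i / (Nat.factorial i) := by
      intro i; rw [mul_pow]; ring
    simp only [h1]
    have h2 : (0:ℝ) ≤ ((k:ℝ)-1) * Real.log ((n : ℝ) / ℓ) := mul_nonneg hM hL
    calc _ ≤ Real.exp (((k:ℝ)-1) * Real.log ((n : ℝ) / ℓ)) :=
          Real.sum_le_exp_of_nonneg h2 _
    _ = ((n:ℝ)/ℓ) ^ (k-1) := by
        have : ((k:ℝ) - 1) = ((k-1 : ℕ) : ℝ) := by
          have : (1:ℕ) ≤ k := by omega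
          push_cast [this]; ring
        rw [this, Real.exp_nat_mul, Real.exp_log hnl]
  calc _ ≤ ∑ r' ∈ Finset.range r, ((n:ℝ)/ℓ) ^ (k-1) := Finset.sum_le_sum key
  _ = (r:ℝ) * ((n:ℝ)/ℓ) ^ (k-1) := by simp [mul_comm]

lemma secW_nonneg (hk : 2 ≤ k) (hℓ : 0 < ℓ) (hln : ℓ ≤ n) : 0 ≤ secW k n r ℓ := by
  have hL := log_nonneg_of_le n ℓ hℓ hln
  have hM : (0:ℝ) ≤ (k:ℝ) - 1 := by
    have : (2:ℝ) ≤ k := by exact_mod_cast hk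
    linarith
  unfold secW
  positivity

lemma secW_self (hn : 0 < n) : secW k n r n = 0 := by
  unfold secW
  have : (n:ℝ)/(n:ℝ) = 1 := by
    rw [div_self]; exact_mod_cast hn.ne'
  simp [this]

end
lemma secS_succ_eq (k n r ℓ : ℕ) :
    secS k n (r+1) ℓ = (r+1) + ((k:ℝ) - 1) * secW k n r ℓ := by
  unfold secS secW
  rw [Finset.sum_range_succ' (fun r' => ∑ i ∈ Finset.range (r' + 1),
    ((k : ℝ) - 1) ^ i / (Nat.factorial i) * (Real.log ((n : ℝ) / ℓ)) ^ i) r]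
  rw [Finset.mul_sum]
  have h0 : ∑ i ∈ Finset.range (0 + 1),
      ((k : ℝ) - 1) ^ i / (Nat.factorial i) * (Real.log ((n : ℝ) / ℓ)) ^ i = 1 := by
    simp
  rw [h0]
  have hterm : ∀ r' ∈ Finset.range r,
      (∑ i ∈ Finset.range (r' + 1 + 1),
        ((k : ℝ) - 1) ^ i / (Nat.factorial i) * (Real.log ((n : ℝ) / ℓ)) ^ i)
      = 1 + ((k:ℝ) - 1) * ∑ i ∈ Finset.range (r' + 1),
          ((k : ℝ) - 1) ^ i / (Nat.factorial i) * (Real.log ((n : ℝ) / ℓ)) ^ (i+1) / (i+1) := by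
    intro r' _
    rw [Finset.sum_range_succ' (fun i => ((k : ℝ) - 1) ^ i / (Nat.factorial i) *
      (Real.log ((n : ℝ) / ℓ)) ^ i) (r'+1)]
    rw [Finset.mul_sum]
    have : ∀ i, ((k : ℝ) - 1) ^ (i+1) / (Nat.factorial (i+1)) * (Real.log ((n : ℝ) / ℓ)) ^ (i+1)
        = ((k:ℝ) - 1) * (((k : ℝ) - 1) ^ i / (Nat.factorial i) *
            (Real.log ((n : ℝ) / ℓ)) ^ (i+1) / (i+1)) := by
      intro i
      have hfac : ((Nat.factorial (i+1) : ℝ)) = (i+1) * (Nat.factorial i) := by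
        rw [Nat.factorial_succ]; push_cast; ring
      have h1 : ((Nat.factorial i : ℝ)) ≠ 0 := by positivity
      have h2 : ((i:ℝ)+1) ≠ 0 := by positivity
      rw [hfac]
      field_simp
      ring
    simp only [this]
    ring_nf
    generalize (∑ x ∈ Finset.range (1 + r'), (-1 + (k:ℝ)) * ((-1 + (k:ℝ)) ^ x / (Nat.factorial x) * Real.log ((n:ℝ) / ℓ) ^ (x + 1) / ((x:ℝ) + 1))) = A
    simp [Nat.factorial]
    ring
  rw [Finset.sum_congr rfl hterm]
  rw [Finset.sum_add_distrib]
  simp only [Finset.sum_const, Finset.card_range, nsmul_eq_mul, mul_one]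
  push_cast
  ring

section
variable (k n r ℓ j : ℕ)

-- step c : secS at j+1 divided by j+1 is at most the secW-difference
lemma secW_step (hk : 2 ≤ k) (hℓ : 0 < ℓ) (hj : ℓ ≤ j) (hjn : j + 1 ≤ n) :
    secS k n r (j+1) / ((j:ℝ)+1) ≤ secW k n r j - secW k n r (j+1) := by
  have hjpos : (0:ℝ) < j := by
    have : 0 < j := lt_of_lt_of_le hℓ hj
    exact_mod_cast this
  have hj1pos : (0:ℝ) < (j:ℝ) + 1 := by linarith
  have hnpos : (0:ℝ) < n := by
    have : 0 < n := by omega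
    exact_mod_cast this
  set a := Real.log ((n:ℝ)/j) with ha
  set b := Real.log ((n:ℝ)/(j+1)) with hb
  have hbpos : 0 ≤ b := by
    rw [hb]
    apply Real.log_nonneg
    rw [le_div_iff₀ hj1pos]
    have : ((j:ℝ)+1) ≤ n := by exact_mod_cast hjn
    linarith
  have hba : b ≤ a := by
    apply Real.log_le_log (by positivity)
    apply div_le_div_of_nonneg_left hnpos.le hjpos
    push_cast; linarith
  have hgap : 1/((j:ℝ)+1) ≤ a - b := by
    have h1 : a = Real.log n - Real.log j := Real.log_div hnpos.ne' hjpos.ne'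
    have h2 : b = Real.log n - Real.log ((j:ℝ)+1) := by
      rw [hb]
      push_cast
      exact Real.log_div hnpos.ne' hj1pos.ne'
    have h3 : Real.log ((j:ℝ)/((j:ℝ)+1)) ≤ (j:ℝ)/((j:ℝ)+1) - 1 :=
      Real.log_le_sub_one_of_pos (by positivity)
    have h4 : Real.log ((j:ℝ)/((j:ℝ)+1)) = Real.log j - Real.log ((j:ℝ)+1) :=
      Real.log_div hjpos.ne' hj1pos.ne'
    have h5 : (j:ℝ)/((j:ℝ)+1) - 1 = -(1/((j:ℝ)+1)) := by
      field_simp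
      ring
    rw [h4, h5] at h3
    linarith
  have hM : (0:ℝ) ≤ (k:ℝ) - 1 := by
    have : (2:ℝ) ≤ k := by exact_mod_cast hk
    linarith
  unfold secS secW
  rw [Finset.sum_div, ← Finset.sum_sub_distrib]
  apply Finset.sum_le_sum
  intro r' _
  rw [Finset.sum_div, ← Finset.sum_sub_distrib]
  apply Finset.sum_le_sum
  intro i _
  have hcast : (n:ℝ)/((j:ℕ)+1 : ℕ) = (n:ℝ)/((j:ℝ)+1) := by push_cast; ring
  rw [hcast]
  have hci : (0:ℝ) ≤ ((k : ℝ) - 1) ^ i / (Nat.factorial i) := by positivity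
  have hpow : ((i:ℝ)+1) * b ^ i * (a - b) ≤ a ^ (i+1) - b ^ (i+1) :=
    pow_sub_pow_ge_lower hbpos hba i
  have hbi : (0:ℝ) ≤ b ^ i := pow_nonneg hbpos i
  have hstep : b ^ i / ((j:ℝ)+1) ≤ a ^ (i+1)/((i:ℝ)+1) - b ^ (i+1)/((i:ℝ)+1) := by
    rw [div_sub_div_same]
    rw [div_le_div_iff₀ hj1pos (by positivity)]
    calc b ^ i * ((i:ℝ)+1) = ((i:ℝ)+1) * b ^ i * 1 := by ring
    _ ≤ ((i:ℝ)+1) * b ^ i * ((a-b) * ((j:ℝ)+1)) := by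
        apply mul_le_mul_of_nonneg_left _ (by positivity)
        rw [← div_le_iff₀ hj1pos]
        exact hgap
    _ = (((i:ℝ)+1) * b ^ i * (a-b)) * ((j:ℝ)+1) := by ring
    _ ≤ (a ^ (i+1) - b ^ (i+1)) * ((j:ℝ)+1) := by
        apply mul_le_mul_of_nonneg_right hpow hj1pos.le
  calc ((k : ℝ) - 1) ^ i / (Nat.factorial i) * b ^ i / ((j:ℝ)+1)
      = ((k : ℝ) - 1) ^ i / (Nat.factorial i) * (b ^ i / ((j:ℝ)+1)) := by ring
  _ ≤ ((k : ℝ) - 1) ^ i / (Nat.factorial i) * (a ^ (i+1)/((i:ℝ)+1) - b ^ (i+1)/((i:ℝ)+1)) :=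
      mul_le_mul_of_nonneg_left hstep hci
  _ = ((k : ℝ) - 1) ^ i / (Nat.factorial i) * a ^ (i+1)/((i:ℝ)+1)
      - ((k : ℝ) - 1) ^ i / (Nat.factorial i) * b ^ (i+1)/((i:ℝ)+1) := by ring

-- step b : the power ratio bound
lemma pow_ratio_bound (hk : 2 ≤ k) (hℓ : k^2 + k ≤ ℓ) (hj : ℓ ≤ j) :
    ((j:ℝ)+1)^k ≤ (1 + 2*(k:ℝ)/ℓ) * (j:ℝ)^k := by
  have hkpos : (0:ℝ) < k := by positivity
  have hℓpos : (0:ℝ) < ℓ := by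
    have : 0 < ℓ := by nlinarith [hk]
    exact_mod_cast (by omega : 0 < ℓ)
  have hjpos : (0:ℝ) < j := by
    have : 0 < j := by omega
    exact_mod_cast this
  have hjℓ : (ℓ:ℝ) ≤ j := by exact_mod_cast hj
  have hkj : (k:ℝ)/j ≤ 1/2 := by
    rw [div_le_div_iff₀ hjpos (by norm_num)]
    have h1 : 2 * k ≤ j := by nlinarith [hk, hℓ, hj]
    have h1' : 2*(k:ℝ) ≤ j := by exact_mod_cast h1
    linarith
  have hexp1 : ((j:ℝ)+1)^k ≤ Real.exp ((k:ℝ)/j) * (j:ℝ)^k := by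
    have h1 : (j:ℝ)+1 = (1 + 1/j) * j := by field_simp
    have h2 : (1 + 1/(j:ℝ)) ≤ Real.exp (1/j) := by
      have := Real.add_one_le_exp (1/(j:ℝ))
      linarith
    have h3 : ((1 + 1/(j:ℝ)))^k ≤ Real.exp (1/(j:ℝ))^k :=
      pow_le_pow_left₀ (by positivity) h2 k
    have h4 : Real.exp (1/(j:ℝ))^k = Real.exp ((k:ℝ)/j) := by
      rw [← Real.exp_nat_mul]
      congr 1
      ring
    rw [h1, mul_pow]
    rw [h4] at h3
    exact mul_le_mul_of_nonneg_right h3 (by positivity)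
  have hexp2 : Real.exp ((k:ℝ)/j) ≤ 1 + 2*((k:ℝ)/j) := by
    set y := (k:ℝ)/j with hy
    have hy0 : 0 ≤ y := by positivity
    have h5 : 1 - y ≤ Real.exp (-y) := by
      have := Real.add_one_le_exp (-y)
      linarith
    have h6 : Real.exp y * (1 - y) ≤ 1 := by
      calc Real.exp y * (1-y) ≤ Real.exp y * Real.exp (-y) := by
            apply mul_le_mul_of_nonneg_left h5 (Real.exp_pos y).le
      _ = 1 := by rw [← Real.exp_add]; simp
    have h7 : (0:ℝ) < 1 - y := by linarith [hkj]
    have h8 : Real.exp y ≤ 1/(1-y) := by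
      rw [le_div_iff₀ h7]
      linarith
    calc Real.exp y ≤ 1/(1-y) := h8
    _ ≤ 1 + 2*y := by
        rw [div_le_iff₀ h7]
        nlinarith [hkj]
  calc ((j:ℝ)+1)^k ≤ Real.exp ((k:ℝ)/j) * (j:ℝ)^k := hexp1
  _ ≤ (1 + 2*((k:ℝ)/j)) * (j:ℝ)^k := by
      apply mul_le_mul_of_nonneg_right hexp2 (by positivity)
  _ ≤ (1 + 2*(k:ℝ)/ℓ) * (j:ℝ)^k := by
      apply mul_le_mul_of_nonneg_right _ (by positivity)
      have : (k:ℝ)/j ≤ (k:ℝ)/ℓ := by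
        apply div_le_div_of_nonneg_left hkpos.le hℓpos hjℓ
      rw [mul_div_assoc]
      linarith

end

section
variable (k n ℓ r : ℕ)

lemma cast_facts (hk : 2 ≤ k) (hℓ : k^2 + k ≤ ℓ) (hn : ℓ ≤ n) :
    (k:ℝ) < ℓ ∧ (0:ℝ) < ℓ ∧ (ℓ:ℝ) ≤ n ∧ (0:ℝ) < n ∧ (1:ℝ) ≤ (k:ℝ) - 1 := by
  have h1 : k < ℓ := by nlinarith
  have h2 : 0 < ℓ := by omega
  have h4 : (0:ℕ) < n := by omega
  refine ⟨by exact_mod_cast h1, by exact_mod_cast h2, by exact_mod_cast hn,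
    by exact_mod_cast h4, ?_⟩
  have : (2:ℝ) ≤ k := by exact_mod_cast hk
  linarith

lemma ratio_le (hk : 2 ≤ k) (hℓ : k^2 + k ≤ ℓ) (j : ℕ) (hj : ℓ ≤ j) :
    (0:ℝ) ≤ ((ℓ:ℝ) - k)/((j:ℝ) - k) ∧ ((ℓ:ℝ) - k)/((j:ℝ) - k) ≤ (ℓ:ℝ)/(j:ℝ) := by
  have h1 : (k:ℝ) < ℓ := by
    have : k < ℓ := by nlinarith
    exact_mod_cast this
  have h2 : (ℓ:ℝ) ≤ j := by exact_mod_cast hj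
  have h3 : (0:ℝ) < (j:ℝ) - k := by linarith
  have h4 : (0:ℝ) < j := by
    have : (0:ℝ) ≤ k := by positivity
    linarith
  constructor
  · apply div_nonneg (by linarith) h3.le
  · rw [div_le_div_iff₀ h3 h4]
    have : (0:ℝ) ≤ k := by positivity
    nlinarith

lemma Sum1 (hk : 2 ≤ k) (hℓ : k^2 + k ≤ ℓ) (hn : ℓ ≤ n) :
    (((ℓ:ℝ) - k) - (ℓ:ℝ)^k/(n:ℝ)^(k-1)) / ((k:ℝ)-1)
      ≤ ∑ j ∈ Icc ℓ (n-1), (((ℓ:ℝ) - k)/((j:ℝ) - k))^k := by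
  obtain ⟨hkℓ, hℓ0, hℓn, hn0, hM⟩ := cast_facts k n ℓ hk hℓ hn
  obtain ⟨m, rfl⟩ : ∃ m, k = m + 2 := ⟨k - 2, by omega⟩
  have hm2 : ((m+2:ℕ):ℝ) = (m:ℝ)+2 := by push_cast; ring
  rw [hm2] at hkℓ ⊢
  have he : m + 2 - 1 = m + 1 := by omega
  rw [he]
  have hA : (0:ℝ) < (ℓ:ℝ) - ((m:ℝ)+2) := by linarith
  have hnK : (0:ℝ) < (n:ℝ) - ((m:ℝ)+2) := by linarith
  set A := (ℓ:ℝ) - ((m:ℝ)+2) with hAdef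
  set C := A^(m+2) / ((m:ℝ)+1) with hC
  set f : ℕ → ℝ := fun i => 1/(((ℓ:ℝ) + i) - ((m:ℝ)+2))^(m+1) with hf
  have hCpos : 0 < C := by rw [hC]; positivity
  have hterm : ∀ i ∈ range (n - ℓ),
      C * (f i - f (i+1)) ≤ (A/(((ℓ+i : ℕ):ℝ) - ((m:ℝ)+2)))^(m+2) := by
    intro i _
    have hx : (0:ℝ) < ((ℓ:ℝ) + i) - ((m:ℝ)+2) := by
      have : (0:ℝ) ≤ i := by positivity
      linarith
    have htel := tele_upper m hx
    have hfi : f i - f (i+1) ≤ ((m:ℝ)+1)/(((ℓ:ℝ) + i) - ((m:ℝ)+2))^(m+2) := by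
      have hx1 : ((ℓ:ℝ) + ((i+1:ℕ):ℝ)) - ((m:ℝ)+2) = (((ℓ:ℝ) + i) - ((m:ℝ)+2)) + 1 := by
        push_cast; ring
      show 1/(((ℓ:ℝ) + i) - ((m:ℝ)+2))^(m+1) - 1/(((ℓ:ℝ) + ((i+1:ℕ):ℝ)) - ((m:ℝ)+2))^(m+1)
          ≤ ((m:ℝ)+1)/(((ℓ:ℝ) + i) - ((m:ℝ)+2))^(m+2)
      rw [hx1]
      exact_mod_cast htel
    have h2 := mul_le_mul_of_nonneg_left hfi hCpos.le
    apply h2.trans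
    have hcast2 : (((ℓ+i : ℕ):ℝ)) = (ℓ:ℝ) + i := by push_cast; ring
    rw [hcast2, div_pow, hC]
    rw [div_mul_div_comm]
    apply le_of_eq
    field_simp
  have htele : ∑ i ∈ range (n - ℓ), C * (f i - f (i+1)) = C * (f 0 - f (n-ℓ)) := by
    rw [← mul_sum, Finset.sum_range_sub' f (n-ℓ)]
  have hconv : ∑ j ∈ Icc ℓ (n-1), (A/((j:ℝ) - ((m:ℝ)+2)))^(m+2)
      = ∑ i ∈ range (n - ℓ), (A/(((ℓ+i : ℕ):ℝ) - ((m:ℝ)+2)))^(m+2) := by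
    rw [← Finset.Ico_add_one_right_eq_Icc, Finset.sum_Ico_eq_sum_range]
    have : n - 1 + 1 - ℓ = n - ℓ := by omega
    rw [this]
  have hmain : (A - (ℓ:ℝ)^(m+2)/(n:ℝ)^(m+1)) / (((m:ℝ)+2)-1) ≤ C * (f 0 - f (n-ℓ)) := by
    have hf0 : f 0 = 1/A^(m+1) := by
      rw [hf]; simp [hAdef]
    have hfn : f (n-ℓ) = 1/((n:ℝ) - ((m:ℝ)+2))^(m+1) := by
      rw [hf]
      have : ((ℓ:ℝ) + ((n-ℓ:ℕ):ℝ)) = (n:ℝ) := by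
        rw [Nat.cast_sub hn]; ring
      simp only
      rw [this]
    rw [hf0, hfn]
    have key2 : A^(m+2)/((n:ℝ)-((m:ℝ)+2))^(m+1) ≤ (ℓ:ℝ)^(m+2)/(n:ℝ)^(m+1) := by
      rw [div_le_div_iff₀ (by positivity) (by positivity)]
      have hr1 : A * (n:ℝ) ≤ (ℓ:ℝ) * ((n:ℝ)-((m:ℝ)+2)) := by
        rw [hAdef]; nlinarith
      have hr2 : (A * (n:ℝ))^(m+1) ≤ ((ℓ:ℝ) * ((n:ℝ)-((m:ℝ)+2)))^(m+1) :=
        pow_le_pow_left₀ (by positivity) hr1 _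
      calc A^(m+2) * (n:ℝ)^(m+1) = A * (A * (n:ℝ))^(m+1) := by rw [mul_pow]; ring
      _ ≤ A * ((ℓ:ℝ) * ((n:ℝ)-((m:ℝ)+2)))^(m+1) := by
          apply mul_le_mul_of_nonneg_left hr2 hA.le
      _ ≤ (ℓ:ℝ) * ((ℓ:ℝ) * ((n:ℝ)-((m:ℝ)+2)))^(m+1) := by
          apply mul_le_mul_of_nonneg_right (by rw [hAdef]; linarith) (by positivity)
      _ = (ℓ:ℝ)^(m+2) * ((n:ℝ)-((m:ℝ)+2))^(m+1) := by rw [mul_pow]; ring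
    have hCf0 : C * (1/A^(m+1)) = A/((m:ℝ)+1) := by
      rw [hC]; field_simp; ring
    have hCfn : C * (1/((n:ℝ) - ((m:ℝ)+2))^(m+1))
        = (A^(m+2)/((n:ℝ)-((m:ℝ)+2))^(m+1))/((m:ℝ)+1) := by
      rw [hC]; field_simp
    rw [mul_sub, hCf0, hCfn]
    have h3 : ((m:ℝ)+2)-1 = (m:ℝ)+1 := by ring
    rw [h3, sub_div]
    gcongr
  calc (A - (ℓ:ℝ)^(m+2)/(n:ℝ)^(m+1)) / (((m:ℝ)+2)-1)
      ≤ C * (f 0 - f (n-ℓ)) := hmain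
  _ = ∑ i ∈ range (n - ℓ), C * (f i - f (i+1)) := htele.symm
  _ ≤ ∑ i ∈ range (n - ℓ), (A/(((ℓ+i : ℕ):ℝ) - ((m:ℝ)+2)))^(m+2) := Finset.sum_le_sum hterm
  _ = ∑ j ∈ Icc ℓ (n-1), (A/((j:ℝ) - ((m:ℝ)+2)))^(m+2) := hconv.symm

end

section
variable (k n ℓ r : ℕ)

lemma Sum3 (hk : 2 ≤ k) (hℓ : k^2 + k ≤ ℓ) (hn : ℓ ≤ n) :
    ∑ j ∈ Icc ℓ (n-1), ((((ℓ:ℝ) - k)/((j:ℝ) - k))^k / ((j:ℝ)+1))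
      ≤ 1/(ℓ:ℝ) + 1/(k:ℝ) := by
  obtain ⟨hkℓ, hℓ0, hℓn, hn0, hM⟩ := cast_facts k n ℓ hk hℓ hn
  have hstep : ∀ j ∈ Icc ℓ (n-1),
      (((ℓ:ℝ) - k)/((j:ℝ) - k))^k / ((j:ℝ)+1) ≤ (ℓ:ℝ)^k / (j:ℝ)^(k+1) := by
    intro j hj
    rw [mem_Icc] at hj
    obtain ⟨hq0, hq1⟩ := ratio_le k ℓ hk hℓ j hj.1
    have hjpos : (0:ℝ) < j := by
      have : 0 < j := by omega
      exact_mod_cast this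
    have h1 : (((ℓ:ℝ) - k)/((j:ℝ) - k))^k ≤ ((ℓ:ℝ)/(j:ℝ))^k := pow_le_pow_left₀ hq0 hq1 k
    have h2 : (((ℓ:ℝ) - k)/((j:ℝ) - k))^k / ((j:ℝ)+1) ≤ ((ℓ:ℝ)/(j:ℝ))^k / ((j:ℝ)+1) := by
      apply div_le_div_of_nonneg_right h1 (by positivity)
    apply h2.trans
    rw [div_pow]
    rw [div_div, div_le_div_iff₀ (by positivity) (by positivity)]
    calc (ℓ:ℝ)^k * (j:ℝ)^(k+1) = ((ℓ:ℝ)^k * (j:ℝ)^k) * (j:ℝ) := by ring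
    _ ≤ ((ℓ:ℝ)^k * (j:ℝ)^k) * ((j:ℝ)+1) := by
        apply mul_le_mul_of_nonneg_left (by linarith) (by positivity)
    _ = (ℓ:ℝ)^k * ((j:ℝ)^k * ((j:ℝ)+1)) := by ring
  apply (Finset.sum_le_sum hstep).trans
  have hconv : ∑ j ∈ Icc ℓ (n-1), (ℓ:ℝ)^k / (j:ℝ)^(k+1)
      = ∑ i ∈ range (n - ℓ), (ℓ:ℝ)^k / (((ℓ+i:ℕ):ℝ))^(k+1) := by
    rw [← Finset.Ico_add_one_right_eq_Icc, Finset.sum_Ico_eq_sum_range]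
    have : n - 1 + 1 - ℓ = n - ℓ := by omega
    rw [this]
  rw [hconv]
  obtain ⟨m, rfl⟩ : ∃ m, k = m + 2 := ⟨k - 2, by omega⟩
  rcases ht : n - ℓ with _ | t
  · simp
    positivity
  · rw [Finset.sum_range_succ' (fun i => ((ℓ:ℝ))^(m+2) / (((ℓ+i:ℕ):ℝ))^(m+2+1)) t]
    have hfirst : (ℓ:ℝ)^(m+2) / (((ℓ+0:ℕ):ℝ))^(m+2+1) = 1/(ℓ:ℝ) := by
      have : ((ℓ+0:ℕ):ℝ) = (ℓ:ℝ) := by push_cast; ring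
      rw [this]
      rw [pow_succ]
      field_simp
      ring
    rw [hfirst]
    have hrest : ∑ i ∈ range t, (ℓ:ℝ)^(m+2) / (((ℓ+(i+1):ℕ):ℝ))^(m+2+1)
        ≤ 1/((m:ℝ)+2) := by
      set v : ℕ → ℝ := fun i => 1/((ℓ:ℝ)+i)^(m+2) with hv
      have hperterm : ∀ i ∈ range t,
          (ℓ:ℝ)^(m+2) / (((ℓ+(i+1):ℕ):ℝ))^(m+2+1)
            ≤ ((ℓ:ℝ)^(m+2)/((m:ℝ)+2)) * (v i - v (i+1)) := by
        intro i _
        have hx : (0:ℝ) < (ℓ:ℝ) + i := by positivity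
        have htel := tele_lower (m+1) hx
        -- htel : (m+1+1)/(x+1)^(m+1+2) ≤ 1/x^(m+1+1) - 1/(x+1)^(m+1+1)
        have hvv : v i - v (i+1) = 1/((ℓ:ℝ)+i)^(m+2) - 1/(((ℓ:ℝ)+i)+1)^(m+2) := by
          rw [hv]; simp only; push_cast; ring_nf
        have hcast : ((ℓ+(i+1):ℕ):ℝ) = ((ℓ:ℝ)+i)+1 := by push_cast; ring
        rw [hcast, hvv]
        have h5 : (ℓ:ℝ)^(m+2) / (((ℓ:ℝ)+i)+1)^(m+2+1)
            = ((ℓ:ℝ)^(m+2)/((m:ℝ)+2)) * (((m:ℝ)+2)/(((ℓ:ℝ)+i)+1)^(m+2+1)) := by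
          field_simp
        rw [h5]
        apply mul_le_mul_of_nonneg_left _ (by positivity)
        push_cast at htel
        have h9 : ((m:ℝ)+1+1) = (m:ℝ)+2 := by ring
        rw [h9] at htel
        exact htel
      apply (Finset.sum_le_sum hperterm).trans
      rw [← mul_sum, Finset.sum_range_sub' v t]
      have hv0 : v 0 = 1/(ℓ:ℝ)^(m+2) := by rw [hv]; simp
      have hvt : 0 ≤ v t := by rw [hv]; positivity
      calc ((ℓ:ℝ)^(m+2)/((m:ℝ)+2)) * (v 0 - v t)
          ≤ ((ℓ:ℝ)^(m+2)/((m:ℝ)+2)) * v 0 := by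
            apply mul_le_mul_of_nonneg_left (by linarith) (by positivity)
      _ = 1/((m:ℝ)+2) := by rw [hv0]; field_simp
    have hk2 : 1/((m:ℝ)+2) = 1/((m+2:ℕ):ℝ) := by push_cast; ring
    rw [hk2] at hrest
    linarith [hrest]

lemma Sum2 (hk : 2 ≤ k) (hℓ : k^2 + k ≤ ℓ) (hn : ℓ ≤ n) :
    ∑ j ∈ Icc ℓ (n-1), ((((ℓ:ℝ) - k)/((j:ℝ) - k))^k * ((j:ℝ)+1)^(k-1) * secS k n r (j+1))
      ≤ (ℓ:ℝ)^k * ((1 + 2*(k:ℝ)/ℓ) * secW k n r ℓ) := by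
  obtain ⟨hkℓ, hℓ0, hℓn, hn0, hM⟩ := cast_facts k n ℓ hk hℓ hn
  have hn1 : 0 < n := by omega
  have hstep : ∀ j ∈ Icc ℓ (n-1),
      (((ℓ:ℝ) - k)/((j:ℝ) - k))^k * ((j:ℝ)+1)^(k-1) * secS k n r (j+1)
        ≤ ((ℓ:ℝ)^k * (1 + 2*(k:ℝ)/ℓ)) * (secW k n r j - secW k n r (j+1)) := by
    intro j hj
    rw [mem_Icc] at hj
    have hjn : j + 1 ≤ n := by omega
    have hjℓ : ℓ ≤ j := hj.1
    obtain ⟨hq0, hq1⟩ := ratio_le k ℓ hk hℓ j hjℓ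
    have hjpos : (0:ℝ) < j := by
      have : 0 < j := by omega
      exact_mod_cast this
    have hS0 : 0 ≤ secS k n r (j+1) := secS_nonneg k n r (j+1) hk (by omega) hjn
    have h1 : (((ℓ:ℝ) - k)/((j:ℝ) - k))^k ≤ (ℓ:ℝ)^k/(j:ℝ)^k := by
      rw [← div_pow]
      exact pow_le_pow_left₀ hq0 hq1 k
    have h2 : (((ℓ:ℝ) - k)/((j:ℝ) - k))^k * ((j:ℝ)+1)^(k-1) * secS k n r (j+1)
        ≤ ((ℓ:ℝ)^k/(j:ℝ)^k) * ((j:ℝ)+1)^(k-1) * secS k n r (j+1) := by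
      apply mul_le_mul_of_nonneg_right _ hS0
      apply mul_le_mul_of_nonneg_right h1 (by positivity)
    apply h2.trans
    have hratio := pow_ratio_bound k ℓ j hk hℓ hjℓ
    have h3 : ((ℓ:ℝ)^k/(j:ℝ)^k) * ((j:ℝ)+1)^(k-1)
        ≤ ((ℓ:ℝ)^k * (1 + 2*(k:ℝ)/ℓ)) / ((j:ℝ)+1) := by
      have hpow : ((j:ℝ)+1)^(k-1) * ((j:ℝ)+1) = ((j:ℝ)+1)^k := by
        rw [← pow_succ]
        congr 1
        omega
      rw [div_mul_eq_mul_div, div_le_div_iff₀ (by positivity) (by positivity)]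
      calc (ℓ:ℝ)^k * ((j:ℝ)+1)^(k-1) * ((j:ℝ)+1) = (ℓ:ℝ)^k * ((j:ℝ)+1)^k := by
            rw [mul_assoc, hpow]
      _ ≤ (ℓ:ℝ)^k * ((1 + 2*(k:ℝ)/ℓ) * (j:ℝ)^k) := by
          apply mul_le_mul_of_nonneg_left hratio (by positivity)
      _ = (ℓ:ℝ)^k * (1 + 2*(k:ℝ)/ℓ) * (j:ℝ)^k := by ring
    have h4 : ((ℓ:ℝ)^k/(j:ℝ)^k) * ((j:ℝ)+1)^(k-1) * secS k n r (j+1)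
        ≤ (((ℓ:ℝ)^k * (1 + 2*(k:ℝ)/ℓ)) / ((j:ℝ)+1)) * secS k n r (j+1) :=
      mul_le_mul_of_nonneg_right h3 hS0
    apply h4.trans
    have h5 := secW_step k n r ℓ j hk (by omega) hjℓ hjn
    have h6 : (((ℓ:ℝ)^k * (1 + 2*(k:ℝ)/ℓ)) / ((j:ℝ)+1)) * secS k n r (j+1)
        = ((ℓ:ℝ)^k * (1 + 2*(k:ℝ)/ℓ)) * (secS k n r (j+1) / ((j:ℝ)+1)) := by ring
    rw [h6]
    apply mul_le_mul_of_nonneg_left h5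
    have h7 : (0:ℝ) ≤ 1 + 2*(k:ℝ)/ℓ := by positivity
    positivity
  apply (Finset.sum_le_sum hstep).trans
  rw [← Finset.mul_sum]
  have hconv : ∑ j ∈ Icc ℓ (n-1), (secW k n r j - secW k n r (j+1))
      = ∑ i ∈ range (n - ℓ), (secW k n r (ℓ+i) - secW k n r (ℓ+i+1)) := by
    rw [← Finset.Ico_add_one_right_eq_Icc, Finset.sum_Ico_eq_sum_range]
    have : n - 1 + 1 - ℓ = n - ℓ := by omega
    rw [this]
  have htele : ∑ i ∈ range (n - ℓ), (secW k n r (ℓ+i) - secW k n r (ℓ+i+1))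
      = secW k n r ℓ - secW k n r n := by
    have := Finset.sum_range_sub' (fun i => secW k n r (ℓ+i)) (n-ℓ)
    simp only [← Nat.add_assoc] at this
    rw [this]
    have h8 : ℓ + (n-ℓ) = n := by omega
    rw [h8, Nat.add_zero]
  rw [hconv, htele, secW_self k n r hn1]
  rw [sub_zero, mul_assoc]

end

lemma per_term (k n r ℓ j : ℕ) (c : ℝ) (hc : 0 ≤ c) (hk : 2 ≤ k)
    (hℓ : k^2 + k ≤ ℓ) (hn : ℓ ≤ n) (hj1 : ℓ ≤ j) (hj2 : j + 1 ≤ n)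
    (G : ℝ)
    (hG : G ≥ (((r:ℝ)) * ((j+1 : ℕ):ℝ) / (((k:ℝ)-1)*(n:ℝ))
        - 1/((k:ℝ)-1) * (((j+1:ℕ):ℝ)/(n:ℝ))^k * secS k n r (j+1)
        - 3*(k:ℝ)^2*(r:ℝ)/(((k:ℝ)-1)*(n:ℝ))) * c) :
    (((ℓ:ℝ) - k)/((j:ℝ) - k))^k * (((k:ℝ)-1)/((j:ℝ)+1) * G + c/(n:ℝ))
      ≥ c * ( ((r:ℝ)+1)/(n:ℝ) * ((((ℓ:ℝ) - k)/((j:ℝ) - k))^k)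
          - (1/(n:ℝ)^k) * ((((ℓ:ℝ) - k)/((j:ℝ) - k))^k * ((j:ℝ)+1)^(k-1) * secS k n r (j+1))
          - (3*(k:ℝ)^2*(r:ℝ)/(n:ℝ)) * ((((ℓ:ℝ) - k)/((j:ℝ) - k))^k / ((j:ℝ)+1)) ) := by
  obtain ⟨hkℓ, hℓ0, hℓn, hn0, hM⟩ := cast_facts k n ℓ hk hℓ hn
  obtain ⟨hq0, hq1⟩ := ratio_le k ℓ hk hℓ j hj1
  have hA0 : (0:ℝ) ≤ (((ℓ:ℝ) - k)/((j:ℝ) - k))^k := pow_nonneg hq0 k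
  have hjpos : (0:ℝ) < j := by
    have : 0 < j := by omega
    exact_mod_cast this
  have hj1pos : (0:ℝ) < (j:ℝ) + 1 := by linarith
  have hB0 : (0:ℝ) ≤ ((k:ℝ)-1)/((j:ℝ)+1) := by
    apply div_nonneg (by linarith) hj1pos.le
  have hMne : ((k:ℝ)-1) ≠ 0 := by linarith
  have hNne : (n:ℝ) ≠ 0 := hn0.ne'
  have hpow : ((j:ℝ)+1)^(k-1) * ((j:ℝ)+1) = ((j:ℝ)+1)^k := by
    rw [← pow_succ]
    congr 1
    omega
  set A := (((ℓ:ℝ) - k)/((j:ℝ) - k))^k with hA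
  set S := secS k n r (j+1) with hS
  set coef := (((r:ℝ)) * ((j+1 : ℕ):ℝ) / (((k:ℝ)-1)*(n:ℝ))
        - 1/((k:ℝ)-1) * (((j+1:ℕ):ℝ)/(n:ℝ))^k * S
        - 3*(k:ℝ)^2*(r:ℝ)/(((k:ℝ)-1)*(n:ℝ))) with hcoef
  have step1 : A * (((k:ℝ)-1)/((j:ℝ)+1) * (coef * c) + c/(n:ℝ))
      ≤ A * (((k:ℝ)-1)/((j:ℝ)+1) * G + c/(n:ℝ)) := by
    apply mul_le_mul_of_nonneg_left _ hA0
    apply add_le_add_left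
    exact mul_le_mul_of_nonneg_left hG hB0
  refine le_trans (le_of_eq ?_) step1
  rw [hcoef]
  have hcast : ((j+1:ℕ):ℝ) = (j:ℝ) + 1 := by push_cast; ring
  rw [hcast, div_pow, ← hpow]
  field_simp
  ring


set_option maxHeartbeats 1000000 in
lemma core_ineq (k : ℕ) (u N ρ W S' : ℝ)
    (hk : 2 ≤ k)
    (hu0 : 0 < u) (hN0 : 0 < N)
    (hW0 : 0 ≤ W)
    (hS'eq : S' = (ρ+1) + ((k:ℝ)-1)*W)
    (hS'le : S' ≤ (ρ+1)*(N/u)^(k-1))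
    (hρ0 : 0 ≤ ρ) (hρK : ρ+1 ≤ (k:ℝ))
    (huK : (k:ℝ)^2 + (k:ℝ) ≤ u) :
    (ρ+1) * u / (((k:ℝ)-1)*N) - 1/((k:ℝ)-1) * (u/N)^k * S' - 3*(k:ℝ)^2*(ρ+1)/(((k:ℝ)-1)*N)
      ≤ (ρ+1)/N * (((u - (k:ℝ)) - u^k/N^(k-1))/((k:ℝ)-1))
        - (1/N^k) * (u^k*((1+2*(k:ℝ)/u)*W))
        - (3*(k:ℝ)^2*ρ/N) * (1/u + 1/(k:ℝ)) := by
  have hM : (1:ℝ) ≤ (k:ℝ) - 1 := by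
    have : (2:ℝ) ≤ (k:ℝ) := by exact_mod_cast hk
    linarith
  have hK0 : (0:ℝ) < (k:ℝ) := by linarith
  have huKρ : (k:ℝ)*ρ ≤ u := by
    have hmul : (k:ℝ)*(ρ+1) ≤ (k:ℝ)*(k:ℝ) := mul_le_mul_of_nonneg_left hρK hK0.le
    nlinarith [hmul, huK, hK0.le]
  have hMne : ((k:ℝ) - 1) ≠ 0 := by linarith
  have hNne : N ≠ 0 := hN0.ne'
  have hune : u ≠ 0 := hu0.ne'
  have hpowq : (u/N)^k = (u/N)^(k-1) * (u/N) := by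
    rw [← pow_succ]
    congr 1
    omega
  have hq0 : (0:ℝ) ≤ (u/N)^k := by positivity
  have e1 : (u/N)*(N/u) = 1 := by field_simp
  have e2 : (u/N)^(k-1)*(N/u)^(k-1) = 1 := by rw [← mul_pow, e1, one_pow]
  have hp4 : (u/N)^k * (N/u)^(k-1) = u/N := by
    rw [hpowq]
    calc (u/N)^(k-1)*(u/N)*(N/u)^(k-1) = ((u/N)^(k-1)*(N/u)^(k-1))*(u/N) := by ring
    _ = u/N := by rw [e2, one_mul]
  have hNk : N^k = N^(k-1) * N := by
    rw [← pow_succ]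
    congr 1
    omega
  have id1 : ((ρ+1)/N) * (((u - (k:ℝ)) - u^k/N^(k-1))/((k:ℝ)-1))
      = (ρ+1)*(u-(k:ℝ))/(((k:ℝ)-1)*N) - (ρ+1)*((u/N)^k)/((k:ℝ)-1) := by
    rw [div_pow, hNk]
    have hNk1 : N^(k-1) ≠ 0 := by positivity
    field_simp
  have id2 : (1/N^k)*(u^k*((1+2*(k:ℝ)/u)*W)) = (u/N)^k*W + (2*(k:ℝ)/u)*((u/N)^k*W) := by
    rw [div_pow]
    have hNk1 : N^k ≠ 0 := by positivity
    field_simp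
  have id3 : (3*(k:ℝ)^2*ρ/N)*(1/u + 1/(k:ℝ)) = 3*(k:ℝ)^2*ρ/(N*u) + 3*(k:ℝ)*ρ/N := by
    have hKne : (k:ℝ) ≠ 0 := hK0.ne'
    field_simp
  have id4 : (u/N)^k*S'/((k:ℝ)-1) = (u/N)^k*(ρ+1)/((k:ℝ)-1) + (u/N)^k*W := by
    rw [hS'eq]
    field_simp
  have hW' : ((k:ℝ)-1)*W ≤ (ρ+1) * (N/u)^(k-1) := by
    have h5 : (0:ℝ) ≤ ρ + 1 := by linarith
    linarith [hS'le, hS'eq]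
  have hQW1 : (u/N)^k * (((k:ℝ)-1)*W) ≤ (u/N)^k * ((ρ+1) * (N/u)^(k-1)) :=
    mul_le_mul_of_nonneg_left hW' hq0
  have hQW2 : (u/N)^k * ((ρ+1) * (N/u)^(k-1)) = (ρ+1)*(u/N) := by
    calc (u/N)^k * ((ρ+1) * (N/u)^(k-1)) = ((u/N)^k * (N/u)^(k-1))*(ρ+1) := by ring
    _ = (ρ+1)*(u/N) := by rw [hp4]; ring
  have hQW : (2*(k:ℝ)/u)*((u/N)^k*W) ≤ 2*(k:ℝ)*(ρ+1)/(((k:ℝ)-1)*N) := by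
    have h6 : (0:ℝ) ≤ 2*(k:ℝ)/u := by positivity
    have h7 : (u/N)^k*W ≤ (ρ+1)*(u/N)/((k:ℝ)-1) := by
      rw [le_div_iff₀ (by linarith : (0:ℝ) < (k:ℝ) - 1)]
      calc (u/N)^k*W*((k:ℝ)-1) = (u/N)^k * (((k:ℝ)-1)*W) := by ring
      _ ≤ (u/N)^k * ((ρ+1) * (N/u)^(k-1)) := hQW1
      _ = (ρ+1)*(u/N) := hQW2
    calc (2*(k:ℝ)/u)*((u/N)^k*W) ≤ (2*(k:ℝ)/u)*((ρ+1)*(u/N)/((k:ℝ)-1)) :=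
          mul_le_mul_of_nonneg_left h7 h6
    _ = 2*(k:ℝ)*(ρ+1)/(((k:ℝ)-1)*N) := by field_simp
  have hfinal0 : 0 ≤ 3*(k:ℝ)^2*(ρ+1)/(((k:ℝ)-1)*N) - (ρ+1)*(k:ℝ)/(((k:ℝ)-1)*N)
      - 2*(k:ℝ)*(ρ+1)/(((k:ℝ)-1)*N) - 3*(k:ℝ)^2*ρ/(N*u) - 3*(k:ℝ)*ρ/N := by
    have heq : 3*(k:ℝ)^2*(ρ+1)/(((k:ℝ)-1)*N) - (ρ+1)*(k:ℝ)/(((k:ℝ)-1)*N)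
        - 2*(k:ℝ)*(ρ+1)/(((k:ℝ)-1)*N) - 3*(k:ℝ)^2*ρ/(N*u) - 3*(k:ℝ)*ρ/N
        = (3*(k:ℝ)*((k:ℝ)-1)*(u - (k:ℝ)*ρ)) / (((k:ℝ)-1)*N*u) := by
      field_simp
      ring
    rw [heq]
    apply div_nonneg _ (by positivity)
    have h10 : 0 ≤ u - (k:ℝ)*ρ := by linarith
    have h11 : 0 ≤ (k:ℝ) - 1 := by linarith
    positivity
  have id4' : 1/((k:ℝ)-1) * (u/N)^k * S' = (u/N)^k*S'/((k:ℝ)-1) := by ring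
  rw [id4', id4, id1, id2, id3]
  have hsplit : (ρ+1)*(u-(k:ℝ))/(((k:ℝ)-1)*N) = (ρ+1)*u/(((k:ℝ)-1)*N) - (ρ+1)*(k:ℝ)/(((k:ℝ)-1)*N) := by
    field_simp
  rw [hsplit, ← sub_nonneg]
  have hid : ((ρ + 1) * u / (((k:ℝ) - 1) * N) - (ρ + 1) * (k:ℝ) / (((k:ℝ) - 1) * N) - (ρ + 1) * (u / N) ^ k / ((k:ℝ) - 1) -
        ((u / N) ^ k * W + 2 * (k:ℝ) / u * ((u / N) ^ k * W)) -
      (3 * (k:ℝ) ^ 2 * ρ / (N * u) + 3 * (k:ℝ) * ρ / N))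
    - ((ρ + 1) * u / (((k:ℝ) - 1) * N) - ((u / N) ^ k * (ρ + 1) / ((k:ℝ) - 1) + (u / N) ^ k * W) -
      3 * (k:ℝ) ^ 2 * (ρ + 1) / (((k:ℝ) - 1) * N))
    = (3 * (k:ℝ) ^ 2 * (ρ + 1) / (((k:ℝ) - 1) * N) - (ρ + 1) * (k:ℝ) / (((k:ℝ) - 1) * N) - 2 * (k:ℝ) * (ρ + 1) / (((k:ℝ) - 1) * N) -
        3 * (k:ℝ) ^ 2 * ρ / (N * u) - 3 * (k:ℝ) * ρ / N)
      + (2 * (k:ℝ) * (ρ + 1) / (((k:ℝ) - 1) * N) - 2 * (k:ℝ) / u * ((u / N) ^ k * W)) := by ring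
  rw [hid]
  exact add_nonneg hfinal0 (sub_nonneg.2 hQW)

set_option maxHeartbeats 1000000 in
theorem secretary_solved_recursion' (k n : ℕ) (hk : 2 ≤ k) (c : ℝ) (hc : 0 ≤ c)
    (g : ℕ → ℕ → ℝ)
    (hgn : ∀ r, g (n + 1) r = 0)
    (hgz : ∀ ℓ, g ℓ 0 ≥ 0)
    (hrec : ∀ ℓ r, k ^ 2 + k ≤ ℓ → ℓ ≤ n → 1 ≤ r → r ≤ k →
      g ℓ r ≥ ∑ j ∈ Finset.Icc ℓ n,
        (((ℓ : ℝ) - k) / ((j : ℝ) - k)) ^ k *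
          (((k : ℝ) - 1) / ((j : ℝ) + 1) * g (j + 1) (r - 1) + c / n)) :
    ∀ r, r ≤ k → ∀ ℓ, k ^ 2 + k ≤ ℓ → ℓ ≤ n →
      g ℓ r ≥ ((r : ℝ) * ℓ / (((k : ℝ) - 1) * n)
        - 1 / ((k : ℝ) - 1) * ((ℓ : ℝ) / n) ^ k * secS k n r ℓ
        - 3 * (k : ℝ) ^ 2 * r / (((k : ℝ) - 1) * n)) * c := by
  intro r
  induction r with
  | zero =>
      intro _ ℓ hℓ1 hℓ2
      have h0 : secS k n 0 ℓ = 0 := by simp [secS]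
      rw [h0]
      have h1 : ((0:ℕ) : ℝ) * ℓ / (((k : ℝ) - 1) * n)
          - 1 / ((k : ℝ) - 1) * ((ℓ : ℝ) / n) ^ k * 0
          - 3 * (k : ℝ) ^ 2 * ((0:ℕ):ℝ) / (((k : ℝ) - 1) * n) = 0 := by
        norm_num
      rw [h1, zero_mul]
      exact hgz ℓ
  | succ r IH =>
      intro hrk ℓ hℓ1 hℓ2
      obtain ⟨hkℓ, hℓ0, hℓn, hn0, hM⟩ := cast_facts k n ℓ hk hℓ1 hℓ2
      have hMne : ((k:ℝ) - 1) ≠ 0 := by linarith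
      have hNne : (n:ℝ) ≠ 0 := hn0.ne'
      have hune : (ℓ:ℝ) ≠ 0 := hℓ0.ne'
      have hK0 : (0:ℝ) < k := by linarith
      have hr := hrec ℓ (r+1) hℓ1 hℓ2 (by omega) hrk
      simp only [Nat.add_sub_cancel] at hr
      have hIcc : Icc ℓ n = insert n (Icc ℓ (n-1)) := by
        ext x; simp only [mem_Icc, mem_insert]; omega
      rw [hIcc, Finset.sum_insert (by simp only [mem_Icc]; omega)] at hr
      have hlast : 0 ≤ (((ℓ:ℝ) - k)/((n:ℝ) - k))^k * (((k:ℝ)-1)/((n:ℝ)+1) * g (n+1) r + c/(n:ℝ)) := by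
        rw [hgn r, mul_zero, zero_add]
        have h1 := (ratio_le k ℓ hk hℓ1 n hℓ2).1
        have h2 : (0:ℝ) ≤ c/(n:ℝ) := by positivity
        exact mul_nonneg (pow_nonneg h1 k) h2
      -- per-term bound
      have hterm : ∀ j ∈ Icc ℓ (n-1),
          c * ( ((r:ℝ)+1)/(n:ℝ) * ((((ℓ:ℝ) - k)/((j:ℝ) - k))^k)
            - (1/(n:ℝ)^k) * ((((ℓ:ℝ) - k)/((j:ℝ) - k))^k * ((j:ℝ)+1)^(k-1) * secS k n r (j+1))
            - (3*(k:ℝ)^2*(r:ℝ)/(n:ℝ)) * ((((ℓ:ℝ) - k)/((j:ℝ) - k))^k / ((j:ℝ)+1)) )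
          ≤ (((ℓ:ℝ) - k)/((j:ℝ) - k))^k * (((k:ℝ)-1)/((j:ℝ)+1) * g (j+1) r + c/(n:ℝ)) := by
        intro j hj
        rw [mem_Icc] at hj
        have hj2 : j + 1 ≤ n := by omega
        exact per_term k n r ℓ j c hc hk hℓ1 hℓ2 hj.1 hj2 (g (j+1) r)
          (IH (by omega) (j+1) (by omega) hj2)
      have hsum := Finset.sum_le_sum hterm
      have hsum_eq : ∑ j ∈ Icc ℓ (n-1),
          c * ( ((r:ℝ)+1)/(n:ℝ) * ((((ℓ:ℝ) - k)/((j:ℝ) - k))^k)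
            - (1/(n:ℝ)^k) * ((((ℓ:ℝ) - k)/((j:ℝ) - k))^k * ((j:ℝ)+1)^(k-1) * secS k n r (j+1))
            - (3*(k:ℝ)^2*(r:ℝ)/(n:ℝ)) * ((((ℓ:ℝ) - k)/((j:ℝ) - k))^k / ((j:ℝ)+1)) )
          = c * ( ((r:ℝ)+1)/(n:ℝ) * (∑ j ∈ Icc ℓ (n-1), (((ℓ:ℝ) - k)/((j:ℝ) - k))^k)
            - (1/(n:ℝ)^k) * (∑ j ∈ Icc ℓ (n-1), ((((ℓ:ℝ) - k)/((j:ℝ) - k))^k * ((j:ℝ)+1)^(k-1) * secS k n r (j+1)))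
            - (3*(k:ℝ)^2*(r:ℝ)/(n:ℝ)) * (∑ j ∈ Icc ℓ (n-1), ((((ℓ:ℝ) - k)/((j:ℝ) - k))^k / ((j:ℝ)+1))) ) := by
        rw [← Finset.mul_sum]
        congr 1
        rw [Finset.sum_sub_distrib, Finset.sum_sub_distrib,
          ← Finset.mul_sum, ← Finset.mul_sum, ← Finset.mul_sum]
      rw [hsum_eq] at hsum
      -- the three sum bounds
      have hSA := Sum1 k n ℓ hk hℓ1 hℓ2
      have hSB := Sum2 k n ℓ r hk hℓ1 hℓ2
      have hSC := Sum3 k n ℓ hk hℓ1 hℓ2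
      have hcA : (0:ℝ) ≤ ((r:ℝ)+1)/(n:ℝ) := by positivity
      have hcB : (0:ℝ) ≤ 1/(n:ℝ)^k := by positivity
      have hcC : (0:ℝ) ≤ 3*(k:ℝ)^2*(r:ℝ)/(n:ℝ) := by positivity
      have h1 := mul_le_mul_of_nonneg_left hSA hcA
      have h2 := mul_le_mul_of_nonneg_left hSB hcB
      have h3 := mul_le_mul_of_nonneg_left hSC hcC
      -- core coefficient inequality
      have hW0 : 0 ≤ (secW k n r ℓ) := secW_nonneg k n r ℓ hk (by omega) hℓ2
      have hS'eq : (secS k n (r+1) ℓ) = ((r:ℝ)+1) + ((k:ℝ) - 1) * (secW k n r ℓ) := by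
        exact secS_succ_eq k n r ℓ
      have hS'le : (secS k n (r+1) ℓ) ≤ ((r:ℝ)+1) * ((n:ℝ)/(ℓ:ℝ))^(k-1) := by
        have := secS_le k n (r+1) ℓ hk (by omega) hℓ2
        push_cast at this
        exact this
      have hρ0 : (0:ℝ) ≤ (r:ℝ) := by positivity
      have hρK : (r:ℝ) + 1 ≤ (k:ℝ) := by
        have h12 : ((r+1:ℕ):ℝ) ≤ ((k:ℕ):ℝ) := Nat.cast_le.mpr hrk
        push_cast at h12
        linarith
      have hcore : ((r+1:ℕ):ℝ) * (ℓ:ℝ) / (((k:ℝ) - 1) * (n:ℝ))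
            - 1 / ((k:ℝ) - 1) * ((ℓ:ℝ) / (n:ℝ)) ^ k * (secS k n (r+1) ℓ)
            - 3 * (k:ℝ) ^ 2 * ((r+1:ℕ):ℝ) / (((k:ℝ) - 1) * (n:ℝ))
          ≤ ((r:ℝ)+1)/(n:ℝ) * ((((ℓ:ℝ) - (k:ℝ)) - (ℓ:ℝ)^k/(n:ℝ)^(k-1))/((k:ℝ)-1))
            - (1/(n:ℝ)^k) * ((ℓ:ℝ)^k*((1+2*(k:ℝ)/(ℓ:ℝ))*(secW k n r ℓ)))
            - (3*(k:ℝ)^2*(r:ℝ)/(n:ℝ)) * (1/(ℓ:ℝ) + 1/(k:ℝ)) := by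
        have hcast : ((r+1:ℕ):ℝ) = (r:ℝ) + 1 := by push_cast; ring
        rw [hcast]
        apply core_ineq k (ℓ:ℝ) (n:ℝ) (r:ℝ) (secW k n r ℓ) (secS k n (r+1) ℓ) hk hℓ0 hn0
          hW0 hS'eq hS'le hρ0 hρK
        have h13 : ((k^2 + k : ℕ):ℝ) ≤ (ℓ:ℝ) := by exact_mod_cast hℓ1
        push_cast at h13
        linarith
      -- combine everything
      have hcoef : (((r+1:ℕ):ℝ) * (ℓ:ℝ) / (((k:ℝ) - 1) * (n:ℝ))
            - 1 / ((k:ℝ) - 1) * ((ℓ:ℝ) / (n:ℝ)) ^ k * (secS k n (r+1) ℓ)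
            - 3 * (k:ℝ) ^ 2 * ((r+1:ℕ):ℝ) / (((k:ℝ) - 1) * (n:ℝ)))
          ≤ ((r:ℝ)+1)/(n:ℝ) * (∑ j ∈ Icc ℓ (n-1), (((ℓ:ℝ) - k)/((j:ℝ) - k))^k)
            - (1/(n:ℝ)^k) * (∑ j ∈ Icc ℓ (n-1), ((((ℓ:ℝ) - k)/((j:ℝ) - k))^k * ((j:ℝ)+1)^(k-1) * secS k n r (j+1)))
            - (3*(k:ℝ)^2*(r:ℝ)/(n:ℝ)) * (∑ j ∈ Icc ℓ (n-1), ((((ℓ:ℝ) - k)/((j:ℝ) - k))^k / ((j:ℝ)+1))) := by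
        exact le_trans hcore (sub_le_sub (sub_le_sub h1 h2) h3)
      have hfin := mul_le_mul_of_nonneg_left hcoef hc
      calc (((r+1:ℕ):ℝ) * (ℓ:ℝ) / (((k:ℝ) - 1) * (n:ℝ))
            - 1 / ((k:ℝ) - 1) * ((ℓ:ℝ) / (n:ℝ)) ^ k * (secS k n (r+1) ℓ)
            - 3 * (k:ℝ) ^ 2 * ((r+1:ℕ):ℝ) / (((k:ℝ) - 1) * (n:ℝ))) * c
          = c * (((r+1:ℕ):ℝ) * (ℓ:ℝ) / (((k:ℝ) - 1) * (n:ℝ))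
            - 1 / ((k:ℝ) - 1) * ((ℓ:ℝ) / (n:ℝ)) ^ k * (secS k n (r+1) ℓ)
            - 3 * (k:ℝ) ^ 2 * ((r+1:ℕ):ℝ) / (((k:ℝ) - 1) * (n:ℝ))) := by ring
      _ ≤ c * ( ((r:ℝ)+1)/(n:ℝ) * (∑ j ∈ Icc ℓ (n-1), (((ℓ:ℝ) - k)/((j:ℝ) - k))^k)
            - (1/(n:ℝ)^k) * (∑ j ∈ Icc ℓ (n-1), ((((ℓ:ℝ) - k)/((j:ℝ) - k))^k * ((j:ℝ)+1)^(k-1) * secS k n r (j+1)))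
            - (3*(k:ℝ)^2*(r:ℝ)/(n:ℝ)) * (∑ j ∈ Icc ℓ (n-1), ((((ℓ:ℝ) - k)/((j:ℝ) - k))^k / ((j:ℝ)+1))) ) := hfin
      _ ≤ ∑ j ∈ Icc ℓ (n-1), (((ℓ:ℝ) - k)/((j:ℝ) - k))^k *
            (((k:ℝ)-1)/((j:ℝ)+1) * g (j+1) r + c/(n:ℝ)) := hsum
      _ ≤ (((ℓ:ℝ) - (k:ℝ))/((n:ℝ) - (k:ℝ)))^k * (((k:ℝ)-1)/((n:ℝ)+1) * g (n+1) r + c/(n:ℝ))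
            + ∑ j ∈ Icc ℓ (n-1), (((ℓ:ℝ) - (k:ℝ))/((j:ℝ) - (k:ℝ)))^k *
              (((k:ℝ)-1)/((j:ℝ)+1) * g (j+1) r + c/(n:ℝ)) := le_add_of_nonneg_left hlast
      _ ≤ g ℓ (r+1) := hr

/-- Lemma 3 of the paper: the solved recursion for the value obtained by the
submodular secretary algorithm from round `ℓ` with remaining capacity `r`. -/
theorem secretary_solved_recursion (k n : ℕ) (hk : 2 ≤ k) (c : ℝ) (hc : 0 ≤ c)
    (g : ℕ → ℕ → ℝ)
    (hgn : ∀ r, g (n + 1) r = 0)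
    (hgz : ∀ ℓ, g ℓ 0 ≥ 0)
    (hrec : ∀ ℓ r, k ^ 2 + k ≤ ℓ → ℓ ≤ n → 1 ≤ r → r ≤ k →
      g ℓ r ≥ ∑ j ∈ Finset.Icc ℓ n,
        (((ℓ : ℝ) - k) / ((j : ℝ) - k)) ^ k *
          (((k : ℝ) - 1) / ((j : ℝ) + 1) * g (j + 1) (r - 1) + c / n)) :
    ∀ ℓ r, k ^ 2 + k ≤ ℓ → ℓ ≤ n → r ≤ k →
      g ℓ r ≥ ((r : ℝ) * ℓ / (((k : ℝ) - 1) * n)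
        - 1 / ((k : ℝ) - 1) * ((ℓ : ℝ) / n) ^ k *
            ∑ r' ∈ Finset.range r, ∑ i ∈ Finset.range (r' + 1),
              ((k : ℝ) - 1) ^ i / (Nat.factorial i) *
                (Real.log ((n : ℝ) / ℓ)) ^ i
        - 3 * (k : ℝ) ^ 2 * r / (((k : ℝ) - 1) * n)) * c := by
  intro ℓ r h1 h2 h3
  exact secretary_solved_recursion' k n hk c hc g hgn hgz hrec r h3 ℓ h1 h2
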